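/- For any group G, 3-cocycle ω ∈ Z³(G, U(1)), and elements g₁, g₂ ∈ G, the 2-cochains Ω_g satisfy Ω_{g₁g₂} = Ω_{g₁}^{g₂} · Ω_{g₂} · dγ(g₁,g₂), where γ(g₁,g₂)(g) = ω(g₁,g₂,g)·ω(^{g₁g₂}g, g₁, g₂) / ω(g₁, ^{g₂}g, g₂) and dγ(g₁,g₂)(h,k) = γ(g₁,g₂)(h)·γ(g₁,g₂)(k)·γ(g₁,g₂)(hk)⁻¹. -/

import Mathlib

/-- A `U(1)`-valued 3-cocycle on a group `G` (trivial action). -/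
def IsCocycle3 {G : Type*} [Group G] (ω : G → G → G → Circle) : Prop :=
  ∀ a b c d : G, ω b c d * ω a (b * c) d * ω a b c = ω (a * b) c d * ω a b (c * d)

/-- The 2-cochain `Ω_g(a,b) = ω(ᵍa, ᵍb, g)·ω(g, a, b)/ω(ᵍa, g, b)`, where `ᵍh = ghg⁻¹`. -/
noncomputable def OmegaCochain {G : Type*} [Group G] (ω : G → G → G → Circle)
    (g a b : G) : Circle :=
  ω (g * a * g⁻¹) (g * b * g⁻¹) g * ω g a b / ω (g * a * g⁻¹) g b

/-- The 1-cochain `γ(g₁,g₂)(g) = ω(g₁,g₂,g)·ω(^{g₁g₂}g, g₁, g₂)/ω(g₁, ^{g₂}g, g₂)`. -/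
noncomputable def gammaCochain {G : Type*} [Group G] (ω : G → G → G → Circle)
    (g₁ g₂ g : G) : Circle :=
  ω g₁ g₂ g * ω ((g₁ * g₂) * g * (g₁ * g₂)⁻¹) g₁ g₂ / ω g₁ (g₂ * g * g₂⁻¹) g₂

private lemma main_aux {x0 x1 x2 x3 x4 x5 x6 x7 x8 x9 x10 x11 x12 x13 x14 x15 x16 x17 x18 x19 x20 x21 x22 x23 : ℂ}
    (h1 : x12 * (x2 * x10) = x18 * x19)
    (h2 : x8 * (x20 * x11) = x18 * x21)
    (h3 : x14 * (x22 * x5) = x23 * x19)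
    (h4 : x6 * (x17 * x4) = x23 * x21)
    (h5 : x7 * (x20 * x9) = x1 * x15)
    (h6 : x13 * (x22 * x3) = x16 * x0)
    (n0 : x0 ≠ 0) (n1 : x1 ≠ 0) (n2 : x2 ≠ 0) (n3 : x3 ≠ 0) (n4 : x4 ≠ 0) (n5 : x5 ≠ 0) (n6 : x6 ≠ 0) (n7 : x7 ≠ 0) (n8 : x8 ≠ 0) (n9 : x9 ≠ 0) (n10 : x10 ≠ 0) (n11 : x11 ≠ 0) (n12 : x12 ≠ 0) (n13 : x13 ≠ 0) (n14 : x14 ≠ 0) (n15 : x15 ≠ 0) (n16 : x16 ≠ 0) (n17 : x17 ≠ 0) (n18 : x18 ≠ 0) (n19 : x19 ≠ 0) (n20 : x20 ≠ 0) (n21 : x21 ≠ 0) (n22 : x22 ≠ 0) (n23 : x23 ≠ 0)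
    :
    x0 * x1 / x2 = x3 * x4 / x5 * (x6 * x7 / x8 * (x9 * x10 / x11 * (x12 * x13 / x14) / (x15 * x16 / x17))) := by
  field_simp
  linear_combination (-(x0*x5*x8*x11*x14*x16)) * h5 + (x0*x5*x7*x9*x14*x16) * h2
      - (x5*x7*x9*x14*x18*x21) * h6 + (x3*x7*x9*x13*x18*x21) * h3
      - (x3*x7*x9*x13*x21*x23) * h1 - (x2*x3*x7*x9*x10*x12*x13) * h4

set_option maxHeartbeats 1000000 in
/-- `Ω_{g₁g₂} = Ω_{g₁}^{g₂} · Ω_{g₂} · dγ(g₁,g₂)`, where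
`Ω^{g₂}(a,b) = Ω(^{g₂}a, ^{g₂}b)` and `(df)(h,k) = f(h)·f(k)/f(hk)`. -/
theorem Omega_mul (G : Type*) [Group G] (ω : G → G → G → Circle)
    (hω : IsCocycle3 ω) (g₁ g₂ : G) :
    ∀ h k : G,
      OmegaCochain ω (g₁ * g₂) h k =
        OmegaCochain ω g₁ (g₂ * h * g₂⁻¹) (g₂ * k * g₂⁻¹) * OmegaCochain ω g₂ h k *
          (gammaCochain ω g₁ g₂ h * gammaCochain ω g₁ g₂ k /
            gammaCochain ω g₁ g₂ (h * k)) := by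
  intro h k
  have hne : ∀ a b c : G, (ω a b c : ℂ) ≠ 0 := fun a b c => Circle.coe_ne_zero _
  have hc : ∀ a b c d : G, (ω b c d : ℂ) * ω a (b*c) d * ω a b c
      = ω (a*b) c d * ω a b (c*d) := by
    intro a b c d
    exact_mod_cast congrArg (fun z : Circle => (z : ℂ)) (hω a b c d)
  have h1 := hc ((g₁*g₂)*h*(g₁*g₂)⁻¹) g₁ g₂ k
  have h2 := hc g₁ (g₂*h*g₂⁻¹) g₂ k
  have h3 := hc ((g₁*g₂)*h*(g₁*g₂)⁻¹) g₁ (g₂*k*g₂⁻¹) g₂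
  have h4 := hc g₁ (g₂*h*g₂⁻¹) (g₂*k*g₂⁻¹) g₂
  have h5 := hc g₁ g₂ h k
  have h6 := hc ((g₁*g₂)*h*(g₁*g₂)⁻¹) ((g₁*g₂)*k*(g₁*g₂)⁻¹) g₁ g₂
  rw [Circle.ext_iff]
  simp only [OmegaCochain, gammaCochain, Circle.coe_mul, Circle.coe_div,
    mul_inv_rev, mul_assoc, inv_mul_cancel_left, mul_inv_cancel_left,
    inv_mul_cancel, mul_inv_cancel, one_mul, mul_one, inv_inv] at h1 h2 h3 h4 h5 h6 ⊢
  exact main_aux h1 h2 h3 h4 h5 h6 (hne _ _ _) (hne _ _ _) (hne _ _ _) (hne _ _ _) (hne _ _ _) (hne _ _ _) (hne _ _ _) (hne _ _ _) (hne _ _ _) (hne _ _ _) (hne _ _ _) (hne _ _ _) (hne _ _ _) (hne _ _ _) (hne _ _ _) (hne _ _ _) (hne _ _ _) (hne _ _ _) (hne _ _ _) (hne _ _ _) (hne _ _ _) (hne _ _ _) (hne _ _ _) (hne _ _ _)
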